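/- For n, m ≥ 2, the directed cycle C_m is φ_n-injective if and only if m divides n. -/

import Mathlib

/-- A quiver: vertex set, edge set, source and target maps. -/
structure Quiv where
  V : Type
  E : Type
  s : E → V
  t : E → V

/-- A quiver homomorphism. -/
@[ext]
structure QuivHom (G H : Quiv) where
  onV : G.V → H.V
  onE : G.E → H.E
  comm_s : ∀ e, H.s (onE e) = onV (G.s e)
  comm_t : ∀ e, H.t (onE e) = onV (G.t e)

/-- Identity quiver homomorphism. -/
def QuivHom.id (G : Quiv) : QuivHom G G :=
  ⟨_root_.id, _root_.id, fun _ => rfl, fun _ => rfl⟩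

/-- Composition of quiver homomorphisms. -/
def QuivHom.comp {G H K : Quiv} (g : QuivHom H K) (f : QuivHom G H) : QuivHom G K :=
  ⟨g.onV ∘ f.onV, g.onE ∘ f.onE,
    fun e => by simp [Function.comp, g.comm_s, f.comm_s],
    fun e => by simp [Function.comp, g.comm_t, f.comm_t]⟩

/-- The directed path `P_n` with vertices `a_0, …, a_{n-1}` and edges `a_i → a_{i+1}`. -/
def Quiv.path (n : ℕ) : Quiv :=
  ⟨Fin n, Fin (n - 1), fun i => ⟨i.val, by have := i.isLt; omega⟩,
    fun i => ⟨i.val + 1, by have := i.isLt; omega⟩⟩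

/-- The directed cycle `C_n`. -/
def Quiv.cyc (n : ℕ) : Quiv :=
  ⟨Fin n, Fin n, _root_.id, fun i => ⟨(i.val + 1) % n, Nat.mod_lt _ i.pos⟩⟩

/-- The natural embedding `φ_n : P_n → C_n`. -/
def pathEmb (n : ℕ) : QuivHom (Quiv.path n) (Quiv.cyc n) where
  onV := _root_.id
  onE := fun i => ⟨i.val, by have := i.isLt; omega⟩
  comm_s := fun e => rfl
  comm_t := fun e => by
    have he := e.isLt
    apply Fin.ext
    show (e.val + 1) % n = e.val + 1
    exact Nat.mod_eq_of_lt (by omega)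

/-- `J` is `φ_n`-injective: every quiver map `P_n → J` factors through `φ_n`. -/
def PhiInj (n : ℕ) (J : Quiv) : Prop :=
  ∀ ψ : QuivHom (Quiv.path n) J, ∃ ψ' : QuivHom (Quiv.cyc n) J,
    ψ'.comp (pathEmb n) = ψ

/-- `v, e` form a walk of length `k` in `J` (only indices `< k` matter). -/
def HasWalk (J : Quiv) (k : ℕ) (v : ℕ → J.V) (e : ℕ → J.E) : Prop :=
  ∀ i < k, J.s (e i) = v i ∧ J.t (e i) = v (i + 1)

/-- There is an edge from `a` to `b` in `J`. -/
def Quiv.Edge (J : Quiv) (a b : J.V) : Prop := ∃ f, J.s f = a ∧ J.t f = b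

/-- A loaded quiver: an edge between every (ordered) pair of vertices. -/
def Quiv.Loaded (J : Quiv) : Prop := ∀ a b, J.Edge a b

/-- `H`, with partitions `A` of its vertices and `B` of its edges indexed by the
vertices and edges of `G`, is a blow-up of `G`. -/
def IsBlowup (G H : Quiv) (A : G.V → Set H.V) (B : G.E → Set H.E) : Prop :=
  (∀ w, ∃! v, w ∈ A v) ∧ (∀ f, ∃! e, f ∈ B e) ∧
  (∀ e f, f ∈ B e → H.s f ∈ A (G.s e) ∧ H.t f ∈ A (G.t e)) ∧
  (∀ e x y, x ∈ A (G.s e) → y ∈ A (G.t e) → ∃ f ∈ B e, H.s f = x ∧ H.t f = y)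

/-- Monomorphisms of quivers: injective vertex and edge maps. -/
def QuivHom.Mono {G H : Quiv} (f : QuivHom G H) : Prop :=
  Function.Injective f.onV ∧ Function.Injective f.onE

/-- A class of quiver morphisms. -/
def MorClass := ∀ D C : Quiv, Set (QuivHom D C)

/-- `J` is injective with respect to a class of morphisms `Φ`. -/
def ClassInjective (Φ : MorClass) (J : Quiv) : Prop :=
  ∀ D C (φ : QuivHom D C), φ ∈ Φ D C → ∀ ψ : QuivHom D J,
    ∃ ψ' : QuivHom C J, ψ'.comp φ = ψ

/-- Undirected adjacency. -/
def Quiv.Adj (J : Quiv) (a b : J.V) : Prop := J.Edge a b ∨ J.Edge b a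

/-- Weak connectivity. -/
def Quiv.WeaklyConnected (J : Quiv) : Prop :=
  ∀ a b : J.V, Relation.ReflTransGen J.Adj a b

/-- `J` has a closed walk of length `m`. -/
def ClosedWalk (J : Quiv) (m : ℕ) : Prop :=
  ∃ v e, HasWalk J m v e ∧ v m = v 0

/-- Cyclic successor on `Fin ℓ`. -/
def finNext {ℓ : ℕ} (i : Fin ℓ) : Fin ℓ := ⟨(i.val + 1) % ℓ, Nat.mod_lt _ i.pos⟩

/-- Disjoint union (coproduct) of a family of quivers. -/
def Quiv.sigma {Λ : Type} (Jf : Λ → Quiv) : Quiv :=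
  ⟨Σ l, (Jf l).V, Σ l, (Jf l).E,
    fun f => ⟨f.1, (Jf f.1).s f.2⟩, fun f => ⟨f.1, (Jf f.1).t f.2⟩⟩

/-- for `n, m ≥ 2`, the cycle `C_m` is `φ_n`-injective iff `m ∣ n`. -/
theorem cyc_phiInj_iff (n m : ℕ) (hn : 2 ≤ n) (hm : 2 ≤ m) :
    PhiInj n (Quiv.cyc m) ↔ m ∣ n := by
  have hm0 : 0 < m := by omega
  constructor
  · intro h
    obtain ⟨ψ', hψ'⟩ := h
      ⟨fun i => ⟨i.val % m, Nat.mod_lt _ hm0⟩,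
       fun i => ⟨i.val % m, Nat.mod_lt _ hm0⟩,
       fun _ => rfl,
       fun e => Fin.ext (Nat.mod_add_mod e.val m 1)⟩
    have hV : ∀ i : Fin n, ψ'.onV i = ⟨i.val % m, Nat.mod_lt _ hm0⟩ := by
      intro i
      exact congrArg (fun φ => QuivHom.onV φ i) hψ'
    have hs := ψ'.comm_s ⟨n - 1, by omega⟩
    have ht := ψ'.comm_t ⟨n - 1, by omega⟩
    have hsv : (ψ'.onE ⟨n - 1, by omega⟩).val = (n - 1) % m := by
      have := hs.trans (hV ⟨n - 1, by omega⟩)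
      exact congrArg Fin.val this
    have htv : ((ψ'.onE ⟨n - 1, by omega⟩).val + 1) % m
        = ((n - 1 + 1) % n) % m := by
      have := ht.trans (hV ((Quiv.cyc n).t ⟨n - 1, by omega⟩))
      exact congrArg Fin.val this
    rw [hsv] at htv
    have h1 : (n - 1 + 1) % n = 0 := by
      have : n - 1 + 1 = n := by omega
      rw [this, Nat.mod_self]
    rw [h1, Nat.zero_mod, Nat.mod_add_mod] at htv
    have : n % m = 0 := by
      have : n - 1 + 1 = n := by omega
      rwa [this] at htv
    exact Nat.dvd_of_mod_eq_zero this
  · intro hdvd ψ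
    -- every step advances by one mod m
    have hstep : ∀ (i : ℕ) (hi : i < n - 1),
        (ψ.onV ⟨i + 1, by omega⟩).val
          = ((ψ.onV ⟨i, by omega⟩).val + 1) % m := by
      intro i hi
      have hs := ψ.comm_s ⟨i, hi⟩
      have ht := ψ.comm_t ⟨i, hi⟩
      have hsv : (ψ.onE ⟨i, hi⟩).val = (ψ.onV ⟨i, by omega⟩).val :=
        congrArg Fin.val hs
      have htv : ((ψ.onE ⟨i, hi⟩).val + 1) % m = (ψ.onV ⟨i + 1, by omega⟩).val :=
        congrArg Fin.val ht
      rw [hsv] at htv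
      exact htv.symm
    have hval : ∀ (i : ℕ) (hi : i < n),
        (ψ.onV ⟨i, hi⟩).val = ((ψ.onV ⟨0, by omega⟩).val + i) % m := by
      intro i
      induction i with
      | zero =>
        intro hi
        simp [Nat.mod_eq_of_lt (ψ.onV ⟨0, by omega⟩).isLt]
      | succ k ih =>
        intro hi
        have hk : k < n - 1 := by omega
        rw [hstep k hk, ih (by omega), Nat.mod_add_mod]
        ring_nf
    refine ⟨⟨ψ.onV, fun e => ψ.onV e, fun _ => rfl, ?_⟩, ?_⟩
    · intro e
      apply Fin.ext
      show ((ψ.onV e).val + 1) % m = (ψ.onV ⟨(e.val + 1) % n, _⟩).val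
      by_cases he : e.val < n - 1
      · have h1 : (e.val + 1) % n = e.val + 1 := Nat.mod_eq_of_lt (by omega)
        have := hstep e.val he
        change (ψ.onV ⟨e.val + 1, by omega⟩).val = ((ψ.onV e).val + 1) % m at this
        simp only [h1]
        exact this.symm
      · have he' : e.val = n - 1 := by have := e.isLt; omega
        have h1 : (e.val + 1) % n = 0 := by
          rw [he']; have : n - 1 + 1 = n := by omega
          rw [this, Nat.mod_self]
        simp only [h1]
        have hv := hval e.val e.isLt
        change (ψ.onV e).val = ((ψ.onV ⟨0, by omega⟩).val + e.val) % m at hv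
        rw [hv, Nat.mod_add_mod]
        have h2 : ((ψ.onV ⟨0, by omega⟩).val + e.val + 1) % m
            = ((ψ.onV ⟨0, by omega⟩).val + n) % m := by
          congr 1
          omega
        rw [h2]
        obtain ⟨c, rfl⟩ := hdvd
        rw [Nat.add_mul_mod_self_left]
        exact Nat.mod_eq_of_lt (ψ.onV ⟨0, by omega⟩).isLt
    · apply QuivHom.ext
      · rfl
      · funext i
        exact (ψ.comm_s i).symm
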